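/- Let I ⊆ ℝ² be a finite set of ideal points, let p = (p₁,p₂) ∈ I, let θ₀ ∈ ℝ and ν ≥ 0. Suppose H_p(θ₀) is a median hyperplane for I, and suppose that for every θ with 0 ≤ θ < ν the line H_p(θ₀+θ) contains at most one point of I. Then H_p(θ₀+θ) is a median hyperplane for I for every θ ∈ [0, ν]. -/

import Mathlib

open scoped RealInnerProductSpace
open Real

noncomputable section

/-- Points of Euclidean space `ℝ^k`. -/
abbrev Pt (k : ℕ) := EuclideanSpace ℝ (Fin k)

/-- `(a, b)` (with `‖a‖ = 1`) is a median hyperplane for the finite set of ideal points `I`: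
at least `|I|/2` points are on each closed side. -/
def IsMedianHyperplane {k : ℕ} (I : Finset (Pt k)) (a : Pt k) (b : ℝ) : Prop :=
  ‖a‖ = 1 ∧
    (I.card : ℝ) / 2 ≤ ((I.filter fun x => ⟪a, x⟫ ≤ b).card : ℝ) ∧
    (I.card : ℝ) / 2 ≤ ((I.filter fun x => b ≤ ⟪a, x⟫).card : ℝ)

/-- A limiting median hyperplane for `I ⊆ ℝ^k` is a median hyperplane containing at least
`k` points of `I`. -/
def IsLimitingMedianHyperplane {k : ℕ} (I : Finset (Pt k)) (a : Pt k) (b : ℝ) : Prop :=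
  IsMedianHyperplane I a b ∧ k ≤ (I.filter fun x => ⟪a, x⟫ = b).card

/-- The yolk radius: infimum of `r ≥ 0` such that some closed ball `B(c,r)` intersects
every median hyperplane of `I` (the ball `B(c,r)` meets `H(a,b)` iff `|⟪a,c⟫ - b| ≤ r`). -/
def yolkRadius {k : ℕ} (I : Finset (Pt k)) : ℝ :=
  sInf {r : ℝ | 0 ≤ r ∧ ∃ c : Pt k, ∀ a b, IsMedianHyperplane I a b → |⟪a, c⟫ - b| ≤ r}

/-- The LP yolk radius: infimum of `r ≥ 0` such that some closed ball `B(c,r)` intersects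
every limiting median hyperplane of `I`. -/
def lpYolkRadius {k : ℕ} (I : Finset (Pt k)) : ℝ :=
  sInf {r : ℝ | 0 ≤ r ∧ ∃ c : Pt k, ∀ a b, IsLimitingMedianHyperplane I a b → |⟪a, c⟫ - b| ≤ r}

/-- `B(c,r)` is a yolk of `I`: it intersects every median hyperplane, and every closed ball
intersecting every median hyperplane has radius at least `r`. -/
def IsYolk {k : ℕ} (I : Finset (Pt k)) (c : Pt k) (r : ℝ) : Prop :=
  (∀ a b, IsMedianHyperplane I a b → |⟪a, c⟫ - b| ≤ r) ∧
  ∀ (c' : Pt k) (r' : ℝ),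
    (∀ a b, IsMedianHyperplane I a b → |⟪a, c'⟫ - b| ≤ r') → r ≤ r'

/-- `B(c,r)` is an LP yolk of `I`: it intersects every limiting median hyperplane, and every
closed ball intersecting every limiting median hyperplane has radius at least `r`. -/
def IsLPYolk {k : ℕ} (I : Finset (Pt k)) (c : Pt k) (r : ℝ) : Prop :=
  (∀ a b, IsLimitingMedianHyperplane I a b → |⟪a, c⟫ - b| ≤ r) ∧
  ∀ (c' : Pt k) (r' : ℝ),
    (∀ a b, IsLimitingMedianHyperplane I a b → |⟪a, c'⟫ - b| ≤ r') → r ≤ r'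

/-- The unit normal `(cos θ, sin θ)` of the rotating line. -/
def rotNormal (θ : ℝ) : Pt 2 := WithLp.toLp 2 ![Real.cos θ, Real.sin θ]

/-- The offset of the line through `p` with unit normal `(cos θ, sin θ)`, so that
`H_p(θ) = H(rotNormal θ, rotOffset p θ)` is the line through `p` rotating about `p`
as `θ` varies. -/
def rotOffset (p : Pt 2) (θ : ℝ) : ℝ := p 0 * Real.cos θ + p 1 * Real.sin θ


lemma rotNormal_inner (t : ℝ) (q : Pt 2) :
    ⟪rotNormal t, q⟫ = Real.cos t * q 0 + Real.sin t * q 1 := by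
  simp [rotNormal, PiLp.inner_apply, Fin.sum_univ_two, RCLike.inner_apply, conj_trivial]; ring

lemma rotNormal_inner_self (t : ℝ) (p : Pt 2) :
    ⟪rotNormal t, p⟫ = rotOffset p t := by
  rw [rotNormal_inner]; unfold rotOffset; ring

lemma rotNormal_norm (t : ℝ) : ‖rotNormal t‖ = 1 := by
  have : ‖rotNormal t‖ = Real.sqrt (Real.cos t ^ 2 + Real.sin t ^ 2) := by
    simp [rotNormal, EuclideanSpace.norm_eq, Fin.sum_univ_two, sq_abs]
  rw [this, Real.cos_sq_add_sin_sq, Real.sqrt_one]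

lemma sign_keep {f : ℝ → ℝ} (hf : Continuous f) {ν θ : ℝ} (hθ : θ ∈ Set.Icc (0:ℝ) ν)
    (hnz : ∀ t, 0 ≤ t → t < ν → f t ≠ 0) (h0 : f 0 ≤ 0) : f θ ≤ 0 := by
  by_contra h
  push_neg at h
  have h0θ : (0:ℝ) ∈ Set.Icc (f 0) (f θ) := ⟨h0, le_of_lt h⟩
  obtain ⟨c, hc, hfc⟩ := intermediate_value_Icc hθ.1 hf.continuousOn h0θ
  have hcθ : c ≠ θ := by
    intro hcθ; rw [hcθ] at hfc; exact (ne_of_gt h) hfc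
  exact hnz c hc.1 (lt_of_lt_of_le (lt_of_le_of_ne hc.2 hcθ) hθ.2) hfc

lemma sign_keep' {f : ℝ → ℝ} (hf : Continuous f) {ν θ : ℝ} (hθ : θ ∈ Set.Icc (0:ℝ) ν)
    (hnz : ∀ t, 0 ≤ t → t < ν → f t ≠ 0) (h0 : 0 ≤ f 0) : 0 ≤ f θ := by
  have := sign_keep (f := fun t => -f t) (hf.neg) hθ
    (fun t ht1 ht2 => neg_ne_zero.mpr (hnz t ht1 ht2)) (by simpa using h0)
  simpa using this

/-- Let `p ∈ I ⊆ ℝ²`. If `H_p(θ₀)` is a median hyperplane for `I`, and for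
every `0 ≤ θ < ν` the line `H_p(θ₀+θ)` contains at most one point of `I`, then `H_p(θ₀+θ)`
is a median hyperplane for `I` for every `θ ∈ [0, ν]`. -/
theorem rotating_median_hyperplane (I : Finset (Pt 2)) (p : Pt 2) (hp : p ∈ I)
    (θ₀ ν : ℝ) (hν : 0 ≤ ν)
    (hmed : IsMedianHyperplane I (rotNormal θ₀) (rotOffset p θ₀))
    (hone : ∀ θ : ℝ, 0 ≤ θ → θ < ν →
      (I.filter fun q => ⟪rotNormal (θ₀ + θ), q⟫ = rotOffset p (θ₀ + θ)).card ≤ 1) :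
    ∀ θ ∈ Set.Icc (0 : ℝ) ν,
      IsMedianHyperplane I (rotNormal (θ₀ + θ)) (rotOffset p (θ₀ + θ)) := by
  intro θ hθ
  set f : Pt 2 → ℝ → ℝ := fun q t => ⟪rotNormal (θ₀ + t), q⟫ - rotOffset p (θ₀ + t) with hf
  have hfeq : ∀ q t, f q t =
      Real.cos (θ₀ + t) * (q 0 - p 0) + Real.sin (θ₀ + t) * (q 1 - p 1) := by
    intro q t
    simp only [hf, rotNormal_inner, rotOffset]
    ring
  have hcont : ∀ q, Continuous (f q) := by
    intro q
    have : f q = fun t => Real.cos (θ₀ + t) * (q 0 - p 0) + Real.sin (θ₀ + t) * (q 1 - p 1) :=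
      funext (hfeq q)
    rw [this]; fun_prop
  have hfp : ∀ t, f p t = 0 := by
    intro t
    show ⟪rotNormal (θ₀ + t), p⟫ - rotOffset p (θ₀ + t) = 0
    rw [rotNormal_inner_self, sub_self]
  have hnz : ∀ q ∈ I, q ≠ p → ∀ t, 0 ≤ t → t < ν → f q t ≠ 0 := by
    intro q hq hqp t ht1 ht2 h0
    have hcard := Finset.card_le_one.mp (hone t ht1 ht2)
    have hqmem : q ∈ I.filter fun x => ⟪rotNormal (θ₀ + t), x⟫ = rotOffset p (θ₀ + t) := by
      rw [Finset.mem_filter]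
      exact ⟨hq, by have := sub_eq_zero.mp h0; exact this⟩
    have hpmem : p ∈ I.filter fun x => ⟪rotNormal (θ₀ + t), x⟫ = rotOffset p (θ₀ + t) := by
      rw [Finset.mem_filter]
      exact ⟨hp, rotNormal_inner_self _ _⟩
    exact hqp (hcard q hqmem p hpmem)
  have hmono1 : (I.filter fun x => ⟪rotNormal θ₀, x⟫ ≤ rotOffset p θ₀) ⊆
      I.filter fun x => ⟪rotNormal (θ₀ + θ), x⟫ ≤ rotOffset p (θ₀ + θ) := by
    intro q hq
    rw [Finset.mem_filter] at hq ⊢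
    refine ⟨hq.1, ?_⟩
    by_cases hqp : q = p
    · subst hqp; rw [rotNormal_inner_self]
    · have h0 : f q 0 ≤ 0 := by simp [hf]; simpa using hq.2
      have := sign_keep (hcont q) hθ (hnz q hq.1 hqp) h0
      simpa [hf, sub_nonpos] using this
  have hmono2 : (I.filter fun x => rotOffset p θ₀ ≤ ⟪rotNormal θ₀, x⟫) ⊆
      I.filter fun x => rotOffset p (θ₀ + θ) ≤ ⟪rotNormal (θ₀ + θ), x⟫ := by
    intro q hq
    rw [Finset.mem_filter] at hq ⊢
    refine ⟨hq.1, ?_⟩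
    by_cases hqp : q = p
    · subst hqp; rw [rotNormal_inner_self]
    · have h0 : 0 ≤ f q 0 := by simp [hf]; simpa using hq.2
      have := sign_keep' (hcont q) hθ (hnz q hq.1 hqp) h0
      simpa [hf, sub_nonneg] using this
  refine ⟨rotNormal_norm _, ?_, ?_⟩
  · exact le_trans hmed.2.1 (by exact_mod_cast Finset.card_le_card hmono1)
  · exact le_trans hmed.2.2 (by exact_mod_cast Finset.card_le_card hmono2)
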